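/- Let L_3 = U^{⊕3} ⊕ E8(-1)^{⊕2} ⊕ ⟨-4⟩. If v ∈ L_3 is a primitive vector with div(v) = 4, then v² ≡ -4 (mod 32). -/

import Mathlib

open Matrix

/-- Gram matrix of the hyperbolic plane `U`. -/
def U2 : Matrix (Fin 2) (Fin 2) ℤ := !![0, 1; 1, 0]

/-- Gram matrix of the negative definite `E8(-1)` lattice. -/
def E8neg : Matrix (Fin 8) (Fin 8) ℤ :=
  !![-2, 1, 0, 0, 0, 0, 0, 0;
      1,-2, 1, 0, 0, 0, 0, 0;
      0, 1,-2, 1, 0, 0, 0, 0;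
      0, 0, 1,-2, 1, 0, 0, 0;
      0, 0, 0, 1,-2, 1, 0, 1;
      0, 0, 0, 0, 1,-2, 1, 0;
      0, 0, 0, 0, 0, 1,-2, 0;
      0, 0, 0, 0, 1, 0, 0,-2]

/-- Index type of the unimodular summand `U^3 ⊕ E8(-1)^2`. -/
abbrev KIdx := (Fin 2 ⊕ (Fin 2 ⊕ Fin 2)) ⊕ (Fin 8 ⊕ Fin 8)

/-- Gram matrix of `U^3 ⊕ E8(-1)^2`. -/
def GramK : Matrix KIdx KIdx ℤ :=
  Matrix.fromBlocks
    (Matrix.fromBlocks U2 0 0 (Matrix.fromBlocks U2 0 0 U2)) 0 0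
    (Matrix.fromBlocks E8neg 0 0 E8neg)

/-- Index type of `L_n = U^3 ⊕ E8(-1)^2 ⊕ ⟨-(2n-2)⟩`. -/
abbrev LIdx := KIdx ⊕ Fin 1

/-- Gram matrix of `L_n = U^3 ⊕ E8(-1)^2 ⊕ ⟨-(2n-2)⟩`. -/
def GramL (n : ℕ) : Matrix LIdx LIdx ℤ :=
  Matrix.fromBlocks GramK 0 0 !![-(2 * (n : ℤ) - 2)]

/-- The bilinear form of `L_n`. -/
def bil (n : ℕ) (v w : LIdx → ℤ) : ℤ := v ⬝ᵥ ((GramL n).mulVec w)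

/-- The `ℚ`-bilinear extension of the form of `L_n` to `L_n ⊗ ℚ`. -/
def bilQ (n : ℕ) (v w : LIdx → ℚ) : ℚ :=
  v ⬝ᵥ (((GramL n).map (Int.cast : ℤ → ℚ)).mulVec w)

/-- The inclusion `L_n ↪ L_n ⊗ ℚ`. -/
def toQ (v : LIdx → ℤ) : LIdx → ℚ := fun i => (v i : ℚ)

/-- The generator `δ` of the summand `⟨-(2n-2)⟩`. -/
def deltaVec : LIdx → ℤ := fun i => if i = Sum.inr 0 then 1 else 0

/-- A lattice vector is primitive if it is not a nontrivial multiple of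
another lattice vector. -/
def IsPrimitive (v : LIdx → ℤ) : Prop :=
  ∀ (k : ℤ) (w : LIdx → ℤ), v = k • w → IsUnit k

/-- `HasDiv n v m` says that `div(v) = m`, i.e. `(v, L_n) = mℤ`. -/
def HasDiv (n : ℕ) (v : LIdx → ℤ) (m : ℤ) : Prop :=
  Ideal.span (Set.range fun w => bil n v w) = Ideal.span {m}


/-- Integer inverse of `E8neg`. -/
def E8inv : Matrix (Fin 8) (Fin 8) ℤ :=
  !![-2, -3, -4, -5, -6, -4, -2, -3;
      -3, -6, -8, -10, -12, -8, -4, -6;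
      -4, -8, -12, -15, -18, -12, -6, -9;
      -5, -10, -15, -20, -24, -16, -8, -12;
      -6, -12, -18, -24, -30, -20, -10, -15;
      -4, -8, -12, -16, -20, -14, -7, -10;
      -2, -4, -6, -8, -10, -7, -4, -5;
      -3, -6, -9, -12, -15, -10, -5, -8]

/-- "Half" of `E8neg`: `E8half + E8halfᵀ = E8neg`. -/
def E8half : Matrix (Fin 8) (Fin 8) ℤ :=
  !![-1, 1, 0, 0, 0, 0, 0, 0;
      0, -1, 1, 0, 0, 0, 0, 0;
      0, 0, -1, 1, 0, 0, 0, 0;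
      0, 0, 0, -1, 1, 0, 0, 0;
      0, 0, 0, 0, -1, 1, 0, 1;
      0, 0, 0, 0, 0, -1, 1, 0;
      0, 0, 0, 0, 0, 0, -1, 0;
      0, 0, 0, 0, 0, 0, 0, -1]

def U2half : Matrix (Fin 2) (Fin 2) ℤ := !![0, 1; 0, 0]

/-- Integer inverse of `GramK`. -/
def GramKinv : Matrix KIdx KIdx ℤ :=
  Matrix.fromBlocks
    (Matrix.fromBlocks U2 0 0 (Matrix.fromBlocks U2 0 0 U2)) 0 0
    (Matrix.fromBlocks E8inv 0 0 E8inv)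

/-- "Half" of `GramK`. -/
def GramKhalf : Matrix KIdx KIdx ℤ :=
  Matrix.fromBlocks
    (Matrix.fromBlocks U2half 0 0 (Matrix.fromBlocks U2half 0 0 U2half)) 0 0
    (Matrix.fromBlocks E8half 0 0 E8half)

lemma gramK_mul_inv : GramK * GramKinv = 1 := by decide

lemma gramK_half : GramKhalf + GramKhalfᵀ = GramK := by decide

/-- The quadratic form of `GramK` takes even values. -/
lemma even_quadK (u : KIdx → ℤ) : 2 ∣ Matrix.vecMul u GramK ⬝ᵥ u := by
  have h : Matrix.vecMul u GramK ⬝ᵥ u = 2 * (Matrix.vecMul u GramKhalf ⬝ᵥ u) := by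
    rw [← gramK_half, Matrix.vecMul_add, add_dotProduct,
      Matrix.vecMul_transpose, ← Matrix.dotProduct_mulVec,
      dotProduct_comm]
    ring
  exact ⟨_, h⟩

/-- in `L_3`, a primitive vector of divisor 4 has `v² ≡ -4 (mod 32)`. -/
theorem stmt_3 (v : LIdx → ℤ) (hprim : IsPrimitive v) (hdiv : HasDiv 3 v 4) :
    bil 3 v v ≡ -4 [ZMOD 32] := by
  set u : KIdx → ℤ := fun k => v (Sum.inl k) with hu_def
  -- every pairing is divisible by 4
  have hdvd : ∀ w : LIdx → ℤ, (4 : ℤ) ∣ bil 3 v w := by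
    intro w
    have hmem : bil 3 v w ∈ Ideal.span (Set.range fun w => bil 3 v w) :=
      Ideal.subset_span ⟨w, rfl⟩
    rw [hdiv, Ideal.mem_span_singleton] at hmem
    exact hmem
  -- hence every entry of `vecMul v (GramL 3)` is divisible by 4
  have hc : ∀ i, (4 : ℤ) ∣ Matrix.vecMul v (GramL 3) i := by
    intro i
    have h := hdvd (Pi.single i 1)
    have heq : bil 3 v (Pi.single i 1) = Matrix.vecMul v (GramL 3) i := by
      rw [bil, Matrix.dotProduct_mulVec]
      simp [dotProduct, Pi.single_apply]
    rwa [heq] at h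
  -- the K-part of `vecMul v (GramL 3)` is `vecMul u GramK`
  have hcK : ∀ k, Matrix.vecMul v (GramL 3) (Sum.inl k) = Matrix.vecMul u GramK k := by
    intro k
    simp [Matrix.vecMul, dotProduct, GramL, Fintype.sum_sum_type, hu_def]
  -- the δ-entry
  have hcd : Matrix.vecMul v (GramL 3) (Sum.inr 0) = -4 * v (Sum.inr 0) := by
    simp [Matrix.vecMul, dotProduct, GramL, Fintype.sum_sum_type]
    ring
  -- unimodularity of GramK: each u k is divisible by 4
  have hu4 : ∀ k, (4 : ℤ) ∣ u k := by
    intro k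
    have hrec : u = Matrix.vecMul (Matrix.vecMul u GramK) GramKinv := by
      rw [Matrix.vecMul_vecMul, gramK_mul_inv, Matrix.vecMul_one]
    have hc4 : ∀ j, (4 : ℤ) ∣ Matrix.vecMul u GramK j := fun j => hcK j ▸ hc (Sum.inl j)
    rw [hrec, show Matrix.vecMul (Matrix.vecMul u GramK) GramKinv k
      = ∑ j, Matrix.vecMul u GramK j * GramKinv j k from rfl]
    exact Finset.dvd_sum fun j _ => (hc4 j).mul_right _
  -- primitivity forces the δ-coordinate to be odd
  have ha : ¬ (2 : ℤ) ∣ v (Sum.inr 0) := by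
    intro h2
    have hv2 : ∀ i, (2 : ℤ) ∣ v i := by
      intro i
      cases i with
      | inl k => exact dvd_trans (by norm_num) (hu4 k)
      | inr j =>
        have : j = 0 := Subsingleton.elim _ _
        rwa [this]
    have hw : v = (2 : ℤ) • (fun i => v i / 2) := by
      funext i
      simp only [Pi.smul_apply, smul_eq_mul]
      exact (Int.mul_ediv_cancel' (hv2 i)).symm
    have := hprim 2 _ hw
    rw [Int.isUnit_iff] at this
    omega
  -- express the quadratic value
  have hbil : bil 3 v v =
      Matrix.vecMul u GramK ⬝ᵥ u - 4 * v (Sum.inr 0) ^ 2 := by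
    have hdp : ∀ c : LIdx → ℤ,
        c ⬝ᵥ v = (∑ k, c (Sum.inl k) * u k) + c (Sum.inr 0) * v (Sum.inr 0) := by
      intro c
      simp [dotProduct, Fintype.sum_sum_type, hu_def]
    rw [bil, Matrix.dotProduct_mulVec, hdp, hcd]
    have hsum : ∑ k, Matrix.vecMul v (GramL 3) (Sum.inl k) * u k
        = Matrix.vecMul u GramK ⬝ᵥ u := by
      rw [dotProduct]
      exact Finset.sum_congr rfl fun k _ => by rw [hcK]
    rw [hsum]
    ring
  -- the unimodular part contributes a multiple of 32
  have hQ : (32 : ℤ) ∣ Matrix.vecMul u GramK ⬝ᵥ u := by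
    obtain ⟨u', hu'⟩ : ∃ u' : KIdx → ℤ, u = (4 : ℤ) • u' :=
      ⟨fun k => u k / 4, funext fun k => by
        simp only [Pi.smul_apply, smul_eq_mul]
        exact (Int.mul_ediv_cancel' (hu4 k)).symm⟩
    obtain ⟨m, hm⟩ := even_quadK u'
    refine ⟨m, ?_⟩
    rw [hu', Matrix.smul_vecMul, smul_dotProduct, dotProduct_smul, hm]
    simp only [smul_eq_mul]
    ring
  -- conclude
  rw [Int.modEq_iff_dvd, hbil]
  obtain ⟨b, hb⟩ : ∃ b, v (Sum.inr 0) = 2 * b + 1 := ⟨v (Sum.inr 0) / 2, by omega⟩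
  obtain ⟨q, hq⟩ := hQ
  obtain ⟨r, hr⟩ := Int.even_mul_succ_self b
  rw [hb, hq]
  exact ⟨-q + r, by linear_combination 16 * hr⟩
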